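/- The convex subdifferential sum rule fails on c_c: with g = δ_{{0}} the indicator of {0}, one has ∂(f+g)(0) equal to the whole dual space of c_c (which is nonempty), while ∂f(0) + ∂g(0) = ∅, even though 0 lies in the algebraic interior of dom(f) − dom(g). -/

import Mathlib

open scoped ENNReal

noncomputable section

abbrev ell2 : Type := lp (fun _ : ℕ => ℝ) 2

lemma memℓp_of_finite_support {x : ℕ → ℝ} (h : (Function.support x).Finite) :
    Memℓp x 2 := by
  apply memℓp_gen
  apply summable_of_finite_support
  refine h.subset ?_
  intro n hn
  simp only [Function.mem_support] at hn ⊢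
  intro h0
  exact hn (by simp [h0])

def ccSubmodule : Submodule ℝ ell2 where
  carrier := {x | (Function.support fun n => (x : ℕ → ℝ) n).Finite}
  add_mem' := by
    intro a b ha hb
    refine Set.Finite.subset (ha.union hb) ?_
    intro n hn
    simp only [Function.mem_support, Set.mem_union] at hn ⊢
    by_contra h
    push_neg at h
    exact hn (by simp [lp.coeFn_add, h.1, h.2])
  zero_mem' := by
    simp only [Set.mem_setOf_eq]
    convert Set.finite_empty
    ext n
    simp [lp.coeFn_zero]
  smul_mem' := by
    intro c a ha
    refine Set.Finite.subset ha ?_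
    intro n hn
    simp only [Function.mem_support] at hn ⊢
    intro h
    exact hn (by simp [lp.coeFn_smul, h])

abbrev cc : Type := ccSubmodule

def seqOf (x : cc) : ℕ → ℝ := fun n => ((x : ell2) : ℕ → ℝ) n

def fSeq (x : ℕ → ℝ) : ℝ :=
  ∑' n : ℕ, (((n : ℝ) + 1) ^ 2 / 2) * (x n - (((n : ℝ) + 1) ^ 2)⁻¹) ^ 2

def fcc (x : cc) : ℝ := fSeq (seqOf x)

/-- The standard unit sequence `e_n` as an element of `c_c`. -/
def eVec (n : ℕ) : cc :=
  ⟨lp.single 2 n (1 : ℝ), by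
    refine Set.Finite.subset (Set.finite_singleton n) ?_
    intro m hm
    simp only [Function.mem_support] at hm
    by_contra hmn
    exact hm (lp.single_apply_ne 2 n _ (by simpa using hmn))⟩

/-- The backward-difference operation on raw sequences, with `x_{-1} := 0`. -/
def Aseq (x : ℕ → ℝ) : ℕ → ℝ := fun n => x n - (if n = 0 then 0 else x (n - 1))

lemma support_Aseq {x : ℕ → ℝ} (h : (Function.support x).Finite) :
    (Function.support (Aseq x)).Finite := by
  refine Set.Finite.subset (h.union (h.image (· + 1))) ?_
  intro n hn
  simp only [Function.mem_support, Aseq] at hn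
  by_contra hc
  simp only [Set.mem_union, Function.mem_support, Set.mem_image, not_or, not_exists] at hc
  obtain ⟨h1, h2⟩ := hc
  apply hn
  rcases n with _ | m
  · simpa using h1
  · have hx1 : x (m + 1) = 0 := not_not.mp h1
    have hx : x m = 0 := by
      by_contra hxm
      exact (h2 m ⟨hxm, rfl⟩).elim
    simp [hx1, hx]

lemma mem_ccSubmodule_of_mk {x : ℕ → ℝ} (hx : Memℓp x 2)
    (h : (Function.support x).Finite) : (⟨x, hx⟩ : ell2) ∈ ccSubmodule := h

/-- The operator `A : c_c → c_c`, `(Ax)_n = x_n - x_{n-1}` (with `x_{-1} := 0`). -/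
def Aop (x : cc) : cc :=
  ⟨⟨Aseq (seqOf x), memℓp_of_finite_support (support_Aseq x.2)⟩,
    mem_ccSubmodule_of_mk _ (support_Aseq x.2)⟩

/-- The Fenchel conjugate of `f`, as a function on `ℓ²`. -/
def fstar (y : ell2) : ℝ :=
  ∑' n : ℕ, (((n : ℝ) + 1) ^ 2)⁻¹ *
    ((1 / 2) * ((y : ℕ → ℝ) n) ^ 2 + (y : ℕ → ℝ) n)

/-- The (formal) adjoint of `A`, acting on `ℓ²` sequences:
`(A*y)_n = y_n - y_{n+1}`. -/
def AstarSeq (y : ell2) : ℕ → ℝ := fun n => (y : ℕ → ℝ) n - (y : ℕ → ℝ) (n + 1)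

open Classical in
/-- The indicator function `δ_{0}` with values in the extended reals. -/
def gind : cc → EReal := fun x => if x = 0 then 0 else ⊤

lemma summable_c : Summable (fun n : ℕ => (((n:ℝ)+1)^2)⁻¹) := by
  have h2 : Summable (fun n : ℕ => ((n:ℝ)^2)⁻¹) := Real.summable_nat_pow_inv.2 one_lt_two
  have := (summable_nat_add_iff (f := fun n : ℕ => ((n:ℝ)^2)⁻¹) 1).2 h2
  exact this.congr (by intro n; push_cast; ring_nf)

lemma summable_b : Summable (fun n : ℕ =>
    (((n : ℝ) + 1) ^ 2 / 2) * ((0:ℝ) - (((n : ℝ) + 1) ^ 2)⁻¹) ^ 2) := by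
  refine (summable_c.mul_left (1/2)).congr fun n => ?_
  have h : ((n:ℝ)+1)^2 ≠ 0 := by positivity
  field_simp
  ring

lemma fcc_zero_eq : fcc 0 = ∑' n : ℕ,
    (((n : ℝ) + 1) ^ 2 / 2) * ((0:ℝ) - (((n : ℝ) + 1) ^ 2)⁻¹) ^ 2 := by
  unfold fcc fSeq
  refine tsum_congr fun n => ?_
  have : seqOf (0 : cc) n = 0 := by simp [seqOf, lp.coeFn_zero]
  rw [this]

lemma fcc_smul_eVec (t : ℝ) (N : ℕ) :
    fcc (t • eVec N) = fcc 0 + ((((N:ℝ)+1)^2/2) * t^2 - t) := by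
  have hseq : ∀ n, seqOf (t • eVec N) n = if n = N then t else 0 := by
    intro n; simp [seqOf, eVec, lp.coeFn_smul, lp.single_apply, Pi.single_apply]
  set D : ℝ := (((N:ℝ)+1)^2/2) * t^2 - t with hD
  have key : (fun n : ℕ => (((n : ℝ) + 1) ^ 2 / 2) *
      (seqOf (t • eVec N) n - (((n : ℝ) + 1) ^ 2)⁻¹) ^ 2)
      = fun n : ℕ => (((n : ℝ) + 1) ^ 2 / 2) * ((0:ℝ) - (((n : ℝ) + 1) ^ 2)⁻¹) ^ 2
        + (if n = N then D else 0) := by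
    funext n
    rw [hseq n]
    by_cases h : n = N
    · subst h
      simp only [if_pos rfl, hD, if_true]
      have h0 : ((n:ℝ)+1)^2 ≠ 0 := by positivity
      field_simp
      ring
    · simp [h]
  have lhs : fcc (t • eVec N) = ∑' n : ℕ, (((n : ℝ) + 1) ^ 2 / 2) *
      (seqOf (t • eVec N) n - (((n : ℝ) + 1) ^ 2)⁻¹) ^ 2 := rfl
  rw [lhs, key, Summable.tsum_add summable_b ((hasSum_ite_eq N D).summable), tsum_ite_eq,
    ← fcc_zero_eq]

lemma aux_quad {K s : ℝ} (hK : 0 < K) (h : ∀ t : ℝ, K * t^2 - t ≥ t * s) :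
    s = -1 := by
  set t₀ : ℝ := (1 + s) / (2*K) with ht₀
  have h1 := h t₀
  have h2 : t₀ * (2*K) = 1 + s := div_mul_cancel₀ _ (by positivity)
  have hsq : (1 + s)^2 ≤ 0 := by nlinarith [sq_nonneg t₀]
  have h0 : 1 + s = 0 := by nlinarith [sq_nonneg (1+s)]
  linarith

lemma subgrad_eVec {xs : cc →L[ℝ] ℝ}
    (hxs : ∀ y : cc, fcc y ≥ fcc 0 + xs (y - 0)) (N : ℕ) : xs (eVec N) = -1 := by
  have hKpos : (0:ℝ) < ((N:ℝ)+1)^2/2 := by positivity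
  refine aux_quad hKpos fun t => ?_
  have := hxs (t • eVec N)
  rw [fcc_smul_eVec, sub_zero, map_smul] at this
  simp only [smul_eq_mul] at this
  linarith
open scoped RealInnerProductSpace in
lemma orthonormal_single : Orthonormal ℝ (fun n : ℕ => (lp.single 2 n (1:ℝ) : ell2)) := by
  rw [orthonormal_iff_ite]
  intro i j
  rw [lp.inner_single_left]
  rcases eq_or_ne i j with rfl | hij
  · simp [lp.single_apply_self, RCLike.inner_apply]
  · simp [lp.single_apply, hij, RCLike.inner_apply]

open scoped RealInnerProductSpace in
lemma norm_combo (k : ℕ) (c : ℝ) :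
    ‖(∑ n ∈ Finset.range k, c • eVec n : cc)‖^2 = k * c^2 := by
  have hON := orthonormal_iff_ite.mp orthonormal_single
  have hcoe : ((∑ n ∈ Finset.range k, c • eVec n : cc) : ell2)
      = ∑ n ∈ Finset.range k, c • (lp.single 2 n (1:ℝ) : ell2) := by
    push_cast
    rfl
  have hnorm : ‖(∑ n ∈ Finset.range k, c • eVec n : cc)‖
      = ‖((∑ n ∈ Finset.range k, c • eVec n : cc) : ell2)‖ := rfl
  rw [hnorm, ← real_inner_self_eq_norm_sq, hcoe, sum_inner]
  simp only [inner_sum, real_inner_smul_left, real_inner_smul_right, hON]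
  simp only [Finset.mul_sum, mul_ite, mul_one, mul_zero, Finset.sum_ite_eq,
    Finset.mem_range]
  have hcong : ∀ x ∈ Finset.range k, (if x < k then c * c else 0) = c * c :=
    fun x hx => if_pos (Finset.mem_range.mp hx)
  rw [Finset.sum_congr rfl hcong, Finset.sum_const, Finset.card_range, nsmul_eq_mul]
  ring

lemma no_subgrad (xs : cc →L[ℝ] ℝ) (h : ∀ N, xs (eVec N) = -1) : False := by
  obtain ⟨k, hk⟩ := exists_nat_gt (‖xs‖^2)
  have hk0 : (0:ℝ) < k := lt_of_le_of_lt (sq_nonneg _) hk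
  have hkne : (k:ℝ) ≠ 0 := ne_of_gt hk0
  set W : cc := ∑ n ∈ Finset.range k, ((k:ℝ)⁻¹) • eVec n with hW
  have hxW : xs W = -1 := by
    rw [hW, map_sum]
    simp only [map_smul, h, smul_eq_mul]
    rw [Finset.sum_const, Finset.card_range]
    field_simp
    rw [nsmul_eq_mul, mul_neg, mul_one_div_cancel hkne]
  have hkB : (k:ℝ) * ‖W‖^2 = 1 := by
    rw [hW, norm_combo]
    field_simp
  have hb := xs.le_opNorm W
  rw [hxW] at hb
  simp only [norm_neg, norm_one] at hb
  have hbb : 1 ≤ (‖xs‖ * ‖W‖)^2 := by nlinarith [norm_nonneg xs, norm_nonneg W]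
  have h4 : (k:ℝ) ≤ k * (‖xs‖*‖W‖)^2 := by nlinarith [hk0]
  have h5 : (k:ℝ) * (‖xs‖*‖W‖)^2 = ‖xs‖^2 * ((k:ℝ) * ‖W‖^2) := by ring
  rw [h5, hkB, mul_one] at h4
  linarith
/-- the sum rule fails: `∂(f + δ_{{0}})(0)` is the whole (nonempty)
dual space, while `∂f(0) + ∂δ_{{0}}(0) = ∅`, although
`0 ∈ core (dom f - dom δ_{{0}})`. -/
theorem sum_rule_fails :
    {xs : cc →L[ℝ] ℝ | ∀ y : cc,
      (fcc y : EReal) + gind y ≥ (fcc 0 : EReal) + gind 0 + ((xs (y - 0) : ℝ) : EReal)}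
      = Set.univ ∧
    (Set.univ : Set (cc →L[ℝ] ℝ)).Nonempty ∧
    {z : cc →L[ℝ] ℝ |
      ∃ a ∈ {xs : cc →L[ℝ] ℝ | ∀ y : cc, fcc y ≥ fcc 0 + xs (y - 0)},
      ∃ b ∈ {xs : cc →L[ℝ] ℝ | ∀ y : cc,
        gind y ≥ gind 0 + ((xs (y - 0) : ℝ) : EReal)},
      z = a + b} = ∅ ∧
    (∀ v : cc, ∃ ε > (0 : ℝ), ∀ t : ℝ, |t| < ε →
      t • v ∈ {d : cc | ∃ a ∈ (Set.univ : Set cc), ∃ b ∈ ({0} : Set cc), d = a - b}) := by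
  refine ⟨?_, ⟨0, trivial⟩, ?_, ?_⟩
  · ext xs
    simp only [Set.mem_setOf_eq, Set.mem_univ, iff_true]
    intro y
    by_cases hy : y = 0
    · subst hy
      simp [gind, sub_zero, map_zero]
    · have hg : gind y = ⊤ := by simp [gind, hy]
      rw [hg, EReal.add_top_of_ne_bot (EReal.coe_ne_bot _)]
      exact le_top
  · rw [Set.eq_empty_iff_forall_notMem]
    rintro z ⟨a, ha, b, hb, rfl⟩
    exact no_subgrad a (subgrad_eVec ha)
  · intro v
    exact ⟨1, one_pos, fun t ht =>
      ⟨t • v, trivial, 0, Set.mem_singleton 0, (sub_zero _).symm⟩⟩
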